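/- Let G be a finite abelian group, g ∈ G∖{0} with ord(g) ≥ |S|+2 and |S| ≥ 3, and let S = g^{|S|−1}·(2g). Then S is zero-sum free and |Σ(S)| = |S| + |supp(S)| − 1 = |S| + 1. -/

import Mathlib

/-- Set of sums of nonempty subsequences of `S`. -/
def subSums {G : Type*} [AddCommMonoid G] (S : Multiset G) : Set G :=
  {x | ∃ T : Multiset G, T ≤ S ∧ T ≠ 0 ∧ T.sum = x}

/-- Set of sums of subsequences of `S` of length exactly `k`. -/
def sumsLen {G : Type*} [AddCommMonoid G] (k : ℕ) (S : Multiset G) : Set G :=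
  {x | ∃ T : Multiset G, T ≤ S ∧ Multiset.card T = k ∧ T.sum = x}

/-- Set of sums of subsequences of `S` of length at least `k`. -/
def sumsGe {G : Type*} [AddCommMonoid G] (k : ℕ) (S : Multiset G) : Set G :=
  {x | ∃ T : Multiset G, T ≤ S ∧ k ≤ Multiset.card T ∧ T.sum = x}

theorem stmt9 {G : Type*} [AddCommGroup G] [Fintype G] [DecidableEq G]
    (m : ℕ) (hm : 3 ≤ m) (g : G) (hg : g ≠ 0) (hord : m + 2 ≤ addOrderOf g)
    (S : Multiset G) (hS : S = Multiset.replicate (m - 1) g + {2 • g}) :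
    (0 : G) ∉ subSums S ∧
      (subSums S).ncard + 1 = Multiset.card S + S.toFinset.card ∧
      (subSums S).ncard = m + 1 := by
  have hgg : (2 : ℕ) • g ≠ g := by
    intro h
    apply hg
    have : g + g = g + 0 := by rw [add_zero]; simpa [two_nsmul] using h
    exact add_left_cancel this
  have hinj : ∀ j k : ℕ, j ≤ m + 1 → k ≤ m + 1 → j • g = k • g → j = k := by
    intro j k hj hk h
    exact nsmul_injOn_Iio_addOrderOf (Set.mem_Iio.mpr (by omega))
      (Set.mem_Iio.mpr (by omega)) h
  have hne0 : ∀ j : ℕ, 1 ≤ j → j ≤ m + 1 → j • g ≠ 0 := by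
    intro j h1 h2 h
    have := hinj j 0 h2 (by omega) (by simpa using h)
    omega
  have hmem : ∀ x, x ∈ subSums S ↔ ∃ j : ℕ, 1 ≤ j ∧ j ≤ m + 1 ∧ j • g = x := by
    intro x
    constructor
    · rintro ⟨T, hT, hT0, rfl⟩
      set a := T.count g with ha
      set b := T.count (2 • g) with hb
      have hle := Multiset.le_iff_count.1 hT
      have hag : a ≤ m - 1 := by
        have := hle g
        simpa [hS, Multiset.count_replicate, Multiset.count_singleton,
          Ne.symm hgg] using this
      have hbg : b ≤ 1 := by
        have := hle (2 • g)
        simpa [hS, Multiset.count_replicate, Multiset.count_singleton, hgg,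
          Ne.symm hgg] using this
      have hTeq : T = Multiset.replicate a g + Multiset.replicate b (2 • g) := by
        ext x
        by_cases hx1 : x = g
        · subst hx1; simp [Multiset.count_replicate, hgg, ha]
        by_cases hx2 : x = 2 • g
        · subst hx2; simp [Multiset.count_replicate, Ne.symm hgg, hb]
        · have hx1' : ¬ g = x := fun h => hx1 h.symm
          have hx2' : ¬ 2 • g = x := fun h => hx2 h.symm
          have := hle x
          simp [hS, Multiset.count_replicate, Multiset.count_singleton,
            hx1, hx2, hx1', hx2'] at this ⊢
          exact this
      have hab : 1 ≤ a + b := by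
        by_contra h
        apply hT0
        have hab' : a = 0 ∧ b = 0 := by omega
        rw [hTeq, hab'.1, hab'.2]; simp
      refine ⟨a + 2 * b, by omega, by omega, ?_⟩
      rw [hTeq]
      simp only [Multiset.sum_add, Multiset.sum_replicate, smul_smul]
      rw [← add_nsmul]
      congr 1
      ring
    · rintro ⟨j, h1, h2, rfl⟩
      by_cases hj : j ≤ m - 1
      · refine ⟨Multiset.replicate j g, ?_, ?_, ?_⟩
        · rw [hS]
          exact le_trans ((Multiset.replicate_le_replicate g).2 hj)
            (Multiset.le_add_right _ _)
        · intro h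
          have := congrArg Multiset.card h
          simp at this
          omega
        · simp [Multiset.sum_replicate]
      · refine ⟨Multiset.replicate (j - 2) g + {2 • g}, ?_, ?_, ?_⟩
        · rw [hS]
          exact add_le_add ((Multiset.replicate_le_replicate g).2 (by omega)) le_rfl
        · simp
        · simp only [Multiset.sum_add, Multiset.sum_replicate, Multiset.sum_singleton]
          rw [← add_nsmul]
          congr 1
          omega
  have hset : subSums S = ↑((Finset.Icc 1 (m + 1)).image (· • g)) := by
    ext x
    simp only [hmem x, Finset.coe_image, Set.mem_image, Finset.mem_coe, Finset.mem_Icc]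
    constructor
    · rintro ⟨j, h1, h2, rfl⟩; exact ⟨j, ⟨h1, h2⟩, rfl⟩
    · rintro ⟨j, ⟨h1, h2⟩, rfl⟩; exact ⟨j, h1, h2, rfl⟩
  have hcard : (subSums S).ncard = m + 1 := by
    rw [hset, Set.ncard_coe_finset, Finset.card_image_of_injOn, Nat.card_Icc]
    · omega
    · intro a ha b hb h
      simp only [Finset.coe_Icc, Set.mem_Icc] at ha hb
      exact hinj a b ha.2 hb.2 h
  refine ⟨?_, ?_, hcard⟩
  · rw [hmem]
    rintro ⟨j, h1, h2, h⟩
    exact hne0 j h1 h2 h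
  have h1 : Multiset.card S = m := by rw [hS]; simp; omega
  have h2 : S.toFinset.card = 2 := by
    rw [hS, Multiset.toFinset_add]
    have e1 : (Multiset.replicate (m - 1) g).toFinset = {g} := by
      rw [Multiset.toFinset_replicate]
      simp only [if_neg (by omega : ¬ m - 1 = 0)]
    have e2 : ({2 • g} : Multiset G).toFinset = {2 • g} := by simp
    rw [e1, e2]
    rw [Finset.card_union_of_disjoint (Finset.disjoint_singleton.mpr (Ne.symm hgg))]
    simp
  rw [hcard, h1, h2]
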